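/- If G and H are connected graphs with γ(G) ≠ 1 and γ(H) ≠ 1, then the outer-connected domination number of the lexicographic product G ∘ H equals the total domination number of G, i.e., γ̃c(G ∘ H) = γ_t(G). -/

import Mathlib

open SimpleGraph

/-- `S` is a dominating set of `G`. -/
def IsDomSet {α : Type*} (G : SimpleGraph α) (S : Set α) : Prop :=
  ∀ v, v ∉ S → ∃ u ∈ S, G.Adj u v

/-- `S` is an outer-connected dominating set of `G`: it dominates `G` and the
subgraph induced on the complement of `S` is connected. -/
def IsOCDomSet {α : Type*} (G : SimpleGraph α) (S : Set α) : Prop :=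
  IsDomSet G S ∧ (G.induce (Sᶜ : Set α)).Connected

/-- `S` is a total dominating set of `G`. -/
def IsTotalDomSet {α : Type*} (G : SimpleGraph α) (S : Set α) : Prop :=
  ∀ v, ∃ u ∈ S, G.Adj u v

/-- The domination number `γ(G)`. -/
noncomputable def domNum {α : Type*} (G : SimpleGraph α) : ℕ :=
  sInf {n | ∃ S : Set α, IsDomSet G S ∧ S.ncard = n}

/-- The outer-connected domination number `γ̃c(G)`. -/
noncomputable def ocDomNum {α : Type*} (G : SimpleGraph α) : ℕ :=
  sInf {n | ∃ S : Set α, IsOCDomSet G S ∧ S.ncard = n}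

/-- The total domination number `γ_t(G)`. -/
noncomputable def totalDomNum {α : Type*} (G : SimpleGraph α) : ℕ :=
  sInf {n | ∃ S : Set α, IsTotalDomSet G S ∧ S.ncard = n}

/-- The minimum degree `δ(G)`. -/
noncomputable def minDeg {α : Type*} (G : SimpleGraph α) : ℕ :=
  sInf {d | ∃ v, (G.neighborSet v).ncard = d}

/-- The lexicographic product `G ∘ H`. -/
def lexProd {α β : Type*} (G : SimpleGraph α) (H : SimpleGraph β) :
    SimpleGraph (α × β) where
  Adj x y := G.Adj x.1 y.1 ∨ (x.1 = y.1 ∧ H.Adj x.2 y.2)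
  symm := by
    constructor
    rintro x y (h | ⟨h1, h2⟩)
    · exact Or.inl h.symm
    · exact Or.inr ⟨h1.symm, h2.symm⟩
  loopless := by
    constructor
    rintro x (h | ⟨_, h⟩)
    · exact G.irrefl h
    · exact H.irrefl h

/-- The corona product `G ∘c H`: one copy of `G` and, for each vertex `x` of `G`,
a copy of `H` whose vertices are all joined to `x`. -/
def corona {α β : Type*} (G : SimpleGraph α) (H : SimpleGraph β) :
    SimpleGraph (α ⊕ α × β) where
  Adj x y :=
    match x, y with
    | Sum.inl a, Sum.inl b => G.Adj a b
    | Sum.inl a, Sum.inr (b, _) => a = b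
    | Sum.inr (a, _), Sum.inl b => a = b
    | Sum.inr (a, u), Sum.inr (b, v) => a = b ∧ H.Adj u v
  symm := by
    constructor
    rintro (a | ⟨a, u⟩) (b | ⟨b, v⟩) h
    · exact h.symm
    · exact h.symm
    · exact h.symm
    · exact ⟨h.1.symm, h.2.symm⟩
  loopless := by
    constructor
    rintro (a | ⟨a, u⟩) h
    · exact G.irrefl h
    · exact H.irrefl h.2

/-- The direct (tensor) product of the complete graphs `K_{n 0}, …, K_{n (t-1)}`:
two `t`-tuples are adjacent iff they differ in every coordinate. -/
def directProdComplete (t : ℕ) (n : Fin t → ℕ) :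
    SimpleGraph (∀ i : Fin t, Fin (n i)) where
  Adj x y := x ≠ y ∧ ∀ i, x i ≠ y i
  symm := by
    constructor
    rintro x y ⟨h1, h2⟩
    exact ⟨h1.symm, fun i => (h2 i).symm⟩
  loopless := ⟨fun x h => h.1 rfl⟩

set_option linter.unusedSectionVars false

section MyAux
variable {α β : Type*} [Fintype α] [Fintype β]

lemma myaux_domNum_ge_two {G : SimpleGraph α} (hne : Nonempty α) (h1 : domNum G ≠ 1) :
    2 ≤ domNum G := by
  have hmem : domNum G ∈ {n | ∃ S : Set α, IsDomSet G S ∧ S.ncard = n} := by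
    apply Nat.sInf_mem
    exact ⟨(Set.univ : Set α).ncard, Set.univ, fun v hv => absurd (Set.mem_univ v) hv, rfl⟩
  obtain ⟨S, hS, hcard⟩ := hmem
  have h0 : domNum G ≠ 0 := by
    intro h
    rw [h] at hcard
    have : S = ∅ := (Set.ncard_eq_zero S.toFinite).mp hcard
    subst this
    obtain ⟨v⟩ := hne
    obtain ⟨u, hu, -⟩ := hS v (Set.notMem_empty v)
    exact hu
  omega

lemma myaux_exists_adj {G : SimpleGraph α} (hG : G.Connected) (hnt : Nontrivial α) (v : α) :
    ∃ u, G.Adj u v := by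
  obtain ⟨w, hw⟩ := exists_ne v
  obtain ⟨p⟩ := hG.preconnected v w
  cases p with
  | nil => exact absurd rfl hw
  | cons h _ => exact ⟨_, h.symm⟩

lemma myaux_lower {G : SimpleGraph α} {H : SimpleGraph β}
    (hG : G.Connected) (hnt : Nontrivial α)
    (hHd : ∀ S : Set β, IsDomSet H S → 2 ≤ S.ncard)
    {S : Set (α × β)} (hS : IsDomSet (lexProd G H) S) :
    totalDomNum G ≤ S.ncard := by
  classical
  set F : Finset (α × β) := S.toFinset with hF
  set D : Finset α := F.image Prod.fst with hD
  set Bad : Finset α := D.filter (fun v => ¬ ∃ u ∈ D, G.Adj u v) with hBad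
  have hnbr : ∀ v : α, ∃ u, G.Adj u v := myaux_exists_adj hG hnt
  set N : α → α := fun v => (hnbr v).choose with hN
  have hNadj : ∀ v, G.Adj (N v) v := fun v => (hnbr v).choose_spec
  set T : Finset α := D ∪ Bad.image N with hT
  have hfiber : ∀ v : α, (¬ ∃ u ∈ D, G.Adj u v) → IsDomSet H {b | (v, b) ∈ S} := by
    intro v hv b hb
    obtain ⟨⟨u, b'⟩, hmem, hadj⟩ := hS (v, b) hb
    rcases hadj with h | ⟨h1, h2⟩
    · exact absurd ⟨u, Finset.mem_image.mpr ⟨(u, b'), Set.mem_toFinset.mpr hmem, rfl⟩, h⟩ hv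
    · have h1' : u = v := h1
      exact ⟨b', by rw [Set.mem_setOf_eq, ← h1']; exact hmem, h2⟩
  have hTdom : IsTotalDomSet G (↑T : Set α) := by
    intro w
    by_cases hw : ∃ u ∈ D, G.Adj u w
    · obtain ⟨u, hu, hadj⟩ := hw
      exact ⟨u, by simp only [hT, Finset.coe_union, Set.mem_union, Finset.mem_coe]; exact Or.inl hu, hadj⟩
    · have hdom := hfiber w hw
      have h2 := hHd _ hdom
      have hne : {b | (w, b) ∈ S}.Nonempty := by
        apply Set.nonempty_of_ncard_ne_zero; omega
      obtain ⟨b, hb⟩ := hne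
      have hwD : w ∈ D := Finset.mem_image.mpr ⟨(w, b), Set.mem_toFinset.mpr hb, rfl⟩
      have hwBad : w ∈ Bad := Finset.mem_filter.mpr ⟨hwD, hw⟩
      refine ⟨N w, ?_, hNadj w⟩
      simp only [hT, Finset.coe_union, Set.mem_union, Finset.mem_coe]
      exact Or.inr (Finset.mem_image.mpr ⟨w, hwBad, rfl⟩)
  have hcount : T.card ≤ F.card := by
    have h1 : F.card = ∑ v ∈ D, (F.filter (fun p => p.1 = v)).card :=
      Finset.card_eq_sum_card_image Prod.fst F
    have h2 : ∀ v ∈ D, (if v ∈ Bad then 2 else 1) ≤ (F.filter (fun p => p.1 = v)).card := by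
      intro v hv
      by_cases hvb : v ∈ Bad
      · simp only [hvb, if_true]
        have hdom := hfiber v (Finset.mem_filter.mp hvb).2
        have h2' := hHd _ hdom
        have hle : ({b | (v, b) ∈ S}).toFinset.card ≤ (F.filter fun p => p.1 = v).card := by
          apply Finset.card_le_card_of_injOn (fun b => (v, b))
          · intro b hb
            rw [Finset.mem_coe, Set.mem_toFinset] at hb
            exact Finset.mem_filter.mpr ⟨Set.mem_toFinset.mpr hb, rfl⟩
          · intro b _ b' _ h
            exact congrArg Prod.snd h
        have := Set.ncard_eq_toFinset_card' {b | (v, b) ∈ S}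
        omega
      · simp only [hvb, if_false]
        rw [Nat.one_le_iff_ne_zero, ← Nat.pos_iff_ne_zero, Finset.card_pos]
        obtain ⟨p, hp, hfst⟩ := Finset.mem_image.mp hv
        exact ⟨p, Finset.mem_filter.mpr ⟨hp, hfst⟩⟩
    have h3 : D.card + Bad.card ≤ ∑ v ∈ D, (F.filter (fun p => p.1 = v)).card := by
      calc D.card + Bad.card = ∑ v ∈ D, (if v ∈ Bad then 2 else 1) := by
            have heq : ∀ v ∈ D, (if v ∈ Bad then 2 else 1) = 1 + (if v ∈ Bad then 1 else 0) := by
              intro v _; split <;> rfl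
            rw [Finset.sum_congr rfl heq, Finset.sum_add_distrib, Finset.sum_const,
              smul_eq_mul, mul_one, Finset.sum_ite_mem, Finset.sum_const, smul_eq_mul, mul_one,
              Finset.inter_eq_right.mpr (Finset.filter_subset _ _)]
        _ ≤ _ := Finset.sum_le_sum h2
    calc T.card ≤ D.card + (Bad.image N).card := Finset.card_union_le _ _
      _ ≤ D.card + Bad.card := by
          have := Finset.card_image_le (s := Bad) (f := N); omega
      _ ≤ ∑ v ∈ D, (F.filter (fun p => p.1 = v)).card := h3
      _ = F.card := h1.symm
  have hfin : totalDomNum G ≤ T.card := Nat.sInf_le ⟨↑T, hTdom, Set.ncard_coe_finset T⟩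
  have : S.ncard = F.card := Set.ncard_eq_toFinset_card' S
  omega

end MyAux

/-- If `G` and `H` are connected with `γ(G) ≠ 1` and `γ(H) ≠ 1`, then
`γ̃c(G ∘ H) = γ_t(G)`. -/
theorem stmt_7 {α β : Type*} [Fintype α] [Fintype β]
    (G : SimpleGraph α) (H : SimpleGraph β)
    (hG : G.Connected) (hH : H.Connected)
    (h1 : domNum G ≠ 1) (h2 : domNum H ≠ 1) :
    ocDomNum (lexProd G H) = totalDomNum G := by
  classical
  have hαne : Nonempty α := hG.nonempty
  have hβne : Nonempty β := hH.nonempty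
  have hG2 := myaux_domNum_ge_two hαne h1
  have hH2 := myaux_domNum_ge_two hβne h2
  have hcardα : 2 ≤ Fintype.card α := by
    have hle : domNum G ≤ (Set.univ : Set α).ncard :=
      Nat.sInf_le ⟨Set.univ, fun v hv => absurd (Set.mem_univ v) hv, rfl⟩
    rw [Set.ncard_univ, Nat.card_eq_fintype_card] at hle
    omega
  have hcardβ : 2 ≤ Fintype.card β := by
    have hle : domNum H ≤ (Set.univ : Set β).ncard :=
      Nat.sInf_le ⟨Set.univ, fun v hv => absurd (Set.mem_univ v) hv, rfl⟩
    rw [Set.ncard_univ, Nat.card_eq_fintype_card] at hle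
    omega
  have hntα : Nontrivial α := Fintype.one_lt_card_iff_nontrivial.mp hcardα
  have hntβ : Nontrivial β := Fintype.one_lt_card_iff_nontrivial.mp hcardβ
  have hHd : ∀ S : Set β, IsDomSet H S → 2 ≤ S.ncard := fun S hS =>
    le_trans hH2 (Nat.sInf_le ⟨S, hS, rfl⟩)
  -- minimum total dominating set of G
  have hTset : totalDomNum G ∈ {n | ∃ S : Set α, IsTotalDomSet G S ∧ S.ncard = n} := by
    apply Nat.sInf_mem
    refine ⟨(Set.univ : Set α).ncard, Set.univ, ?_, rfl⟩
    intro v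
    obtain ⟨u, hu⟩ := myaux_exists_adj hG hntα v
    exact ⟨u, Set.mem_univ u, hu⟩
  obtain ⟨T, hT, hTcard⟩ := hTset
  obtain ⟨b0, b1, hb01⟩ := exists_pair_ne β
  -- the witness for the upper bound
  set S : Set (α × β) := (fun a => (a, b0)) '' T with hSdef
  have hmemc : ∀ (a : α) (b : β), b ≠ b0 → (a, b) ∈ Sᶜ := by
    intro a b hb hmem
    obtain ⟨t, _, heq⟩ := hmem
    exact hb (congrArg Prod.snd heq).symm
  have hdomS : IsDomSet (lexProd G H) S := by
    rintro ⟨v, b⟩ hvb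
    obtain ⟨u, hu, hadj⟩ := hT v
    exact ⟨(u, b0), ⟨u, hu, rfl⟩, Or.inl hadj⟩
  have hm : ∀ a : α, ((a, b1) : α × β) ∈ Sᶜ := fun a => hmemc a b1 hb01.symm
  have hconn : ((lexProd G H).induce (Sᶜ : Set (α × β))).Connected := by
    have hadj_ind : ∀ (x y : α × β) (hx : x ∈ Sᶜ) (hy : y ∈ Sᶜ),
        (lexProd G H).Adj x y → ((lexProd G H).induce (Sᶜ : Set (α × β))).Adj ⟨x, hx⟩ ⟨y, hy⟩ := by
      intro x y hx hy h
      exact h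
    have key : ∀ (a a' : α), G.Walk a a' →
        ((lexProd G H).induce (Sᶜ : Set (α × β))).Reachable ⟨(a, b1), hm a⟩ ⟨(a', b1), hm a'⟩ := by
      intro a a' p
      induction p with
      | nil => exact Reachable.refl _
      | @cons u v w h p ih =>
          exact (hadj_ind _ _ (hm u) (hm v) (Or.inl h)).reachable.trans ih
    have hto : ∀ (x : α × β) (hx : x ∈ Sᶜ), ∃ a : α,
        ((lexProd G H).induce (Sᶜ : Set (α × β))).Reachable ⟨x, hx⟩ ⟨(a, b1), hm a⟩ := by
      rintro ⟨a, b⟩ hx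
      obtain ⟨u, hu⟩ := myaux_exists_adj hG hntα a
      exact ⟨u, ((hadj_ind _ _ hx (hm u)) (Or.inl hu.symm)).reachable⟩
    rw [connected_iff]
    refine ⟨?_, ⟨⟨(Classical.arbitrary α, b1), hm _⟩⟩⟩
    rintro ⟨x, hx⟩ ⟨y, hy⟩
    obtain ⟨ax, hax⟩ := hto x hx
    obtain ⟨ay, hay⟩ := hto y hy
    obtain ⟨p⟩ := hG.preconnected ax ay
    exact hax.trans ((key _ _ p).trans hay.symm)
  have hScard : S.ncard = totalDomNum G := by
    rw [hSdef, Set.ncard_image_of_injective T (fun a a' h => congrArg Prod.fst h), hTcard]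
  apply le_antisymm
  · calc ocDomNum (lexProd G H) ≤ S.ncard := Nat.sInf_le ⟨S, ⟨hdomS, hconn⟩, rfl⟩
      _ = totalDomNum G := hScard
  · have hocmem : ocDomNum (lexProd G H) ∈
        {n | ∃ S' : Set (α × β), IsOCDomSet (lexProd G H) S' ∧ S'.ncard = n} :=
      Nat.sInf_mem ⟨S.ncard, S, ⟨hdomS, hconn⟩, rfl⟩
    obtain ⟨S', ⟨hS'dom, -⟩, hS'card⟩ := hocmem
    rw [← hS'card]
    exact myaux_lower hG hntα hHd hS'dom
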